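/- Let a ∈ (0,1) and p,q,r ∈ (0,1) with p ≤ 1/2, r ≤ 1/2, and (1/2-q)² ≤ (1/2-p)(1/2-r). Define R(K₁,K₂,K₃) = a²(log(1+e^{K₁}) - p·K₁) + 2a(1-a)(log(1+e^{K₂}) - q·K₂) + (1-a)²(log(1+e^{K₃}) - r·K₃). Then for every (K₁,K₂,K₃) with K₁ ≥ 0, K₃ ≥ 0, K₂² ≤ K₁K₃, we have R(K₁,K₂,K₃) ≥ R(0,0,0); i.e., the origin is a global minimizer of R over the PSD cone. -/
import Mathlib


noncomputable def risk (a p q r K₁ K₂ K₃ : ℝ) : ℝ :=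
  a^2 * (Real.log (1 + Real.exp K₁) - p * K₁)
  + 2 * a * (1 - a) * (Real.log (1 + Real.exp K₂) - q * K₂)
  + (1 - a)^2 * (Real.log (1 + Real.exp K₃) - r * K₃)

lemma log_tangent (K : ℝ) : Real.log 2 + K / 2 ≤ Real.log (1 + Real.exp K) := by
  have hprod : (1 : ℝ) + Real.exp K
      = Real.exp (K / 2) * (Real.exp (-(K / 2)) + Real.exp (K / 2)) := by
    rw [mul_add, ← Real.exp_add, ← Real.exp_add]
    ring_nf
    simp [add_comm]
  have h2 : (2 : ℝ) ≤ Real.exp (-(K / 2)) + Real.exp (K / 2) := by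
    have h1 : Real.exp (-(K / 2)) * Real.exp (K / 2) = 1 := by
      rw [← Real.exp_add]; simp
    nlinarith [Real.exp_pos (-(K / 2)), Real.exp_pos (K / 2),
      sq_nonneg (Real.exp (-(K / 2)) - Real.exp (K / 2))]
  rw [hprod, Real.log_mul (Real.exp_ne_zero _) (by positivity), Real.log_exp]
  have := Real.log_le_log (by norm_num) h2
  linarith

lemma cone_ineq (α β γ x y z : ℝ) (hα : 0 ≤ α) (hγ : 0 ≤ γ)
    (hβ : β ^ 2 ≤ 4 * α * γ) (hx : 0 ≤ x) (hz : 0 ≤ z) (hy : y ^ 2 ≤ x * z) :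
    0 ≤ α * x + β * y + γ * z := by
  by_contra h
  push_neg at h
  have h1 : β ^ 2 * y ^ 2 ≤ 4 * α * γ * (x * z) :=
    mul_le_mul hβ hy (sq_nonneg y) (by positivity)
  nlinarith [sq_nonneg (α * x - γ * z), mul_nonneg hα hx, mul_nonneg hγ hz]

theorem sparse_regime_origin_min (a p q r : ℝ)
    (ha : a ∈ Set.Ioo (0:ℝ) 1)
    (hp : p ∈ Set.Ioo (0:ℝ) 1) (hq : q ∈ Set.Ioo (0:ℝ) 1) (hr : r ∈ Set.Ioo (0:ℝ) 1)
    (hp2 : p ≤ 1/2) (hr2 : r ≤ 1/2)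
    (hsparse : (1/2 - q)^2 ≤ (1/2 - p) * (1/2 - r)) :
    ∀ K₁ K₂ K₃ : ℝ, 0 ≤ K₁ → 0 ≤ K₃ → K₂^2 ≤ K₁ * K₃ →
      risk a p q r 0 0 0 ≤ risk a p q r K₁ K₂ K₃ := by
  intro K₁ K₂ K₃ hK₁ hK₃ hK₂
  obtain ⟨ha0, ha1⟩ := ha
  have hα : (0:ℝ) ≤ a ^ 2 * (1 / 2 - p) := by nlinarith
  have hγ : (0:ℝ) ≤ (1 - a) ^ 2 * (1 / 2 - r) := by nlinarith
  have hβ : (2 * a * (1 - a) * (1 / 2 - q)) ^ 2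
      ≤ 4 * (a ^ 2 * (1 / 2 - p)) * ((1 - a) ^ 2 * (1 / 2 - r)) := by
    nlinarith [sq_nonneg (a * (1 - a)), sq_nonneg (1 / 2 - q)]
  have hcone := cone_ineq _ _ _ _ _ _ hα hγ hβ hK₁ hK₃ hK₂
  have e1 := log_tangent K₁
  have e2 := log_tangent K₂
  have e3 := log_tangent K₃
  simp only [risk, Real.exp_zero]
  have hlog2 : Real.log (1 + 1) = Real.log 2 := by norm_num
  rw [hlog2]
  have m1 : a ^ 2 * (Real.log 2 + K₁ / 2) ≤ a ^ 2 * Real.log (1 + Real.exp K₁) :=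
    mul_le_mul_of_nonneg_left e1 (sq_nonneg a)
  have m2 : 2 * a * (1 - a) * (Real.log 2 + K₂ / 2)
      ≤ 2 * a * (1 - a) * Real.log (1 + Real.exp K₂) :=
    mul_le_mul_of_nonneg_left e2 (by nlinarith)
  have m3 : (1 - a) ^ 2 * (Real.log 2 + K₃ / 2)
      ≤ (1 - a) ^ 2 * Real.log (1 + Real.exp K₃) :=
    mul_le_mul_of_nonneg_left e3 (sq_nonneg (1 - a))
  nlinarith [m1, m2, m3, hcone]
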